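/- Auxiliary limit representation for the m-dimensional quadratic equation in Banach spaces: if f: E → Y satisfies ‖f(∑x_i) + ∑_{i<j} f(x_i − x_j) − m∑f(x_i)‖ ≤ φ(x₁,…,x_m) with lim_{n→∞} φ(x, nx, …, nx) = 0, then for every x ∈ E, f(x) = lim_{n→∞} [ (1/m)f((1+mn−n)x) + ((m−1)/m)f((1−n)x) − (m−1)f(nx) ] in the norm of Y. -/

import Mathlib

open Filter Topology

theorem mdim_quadratic_limit_representation_banach
    {K : Type*} [Field K] {X : Type*} [AddCommGroup X] [Module K X]
    {Y : Type*} [NormedAddCommGroup Y] [NormedSpace ℝ Y] [CompleteSpace Y]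
    (E : Set X) (hEne : E.Nonempty)
    (hEneg : ∀ x ∈ E, -x ∈ E)
    (hEadd : ∀ x ∈ E, ∀ y ∈ E, x + y ∈ E)
    (hEsub : ∀ x ∈ E, ∀ y ∈ E, x - y ∈ E)
    (hEsmul : ∀ (k : K), ∀ x ∈ E, k • x ∈ E)
    (m : ℕ) (hm : 2 ≤ m)
    (φ : (Fin m → X) → ℝ) (hφnonneg : ∀ x, 0 ≤ φ x)
    (hφ1 : ∀ x ∈ E,
      Tendsto (fun n : ℕ => φ (fun i => if i = ⟨0, by omega⟩ then x else n • x))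
        atTop (𝓝 0))
    (f : X → Y)
    (hf : ∀ x : Fin m → X, (∀ i, x i ∈ E) →
      ‖f (∑ i, x i)
          + ∑ q ∈ Finset.univ.filter (fun q : Fin m × Fin m => q.1 < q.2),
              f (x q.1 - x q.2)
          - m • ∑ i, f (x i)‖ ≤ φ x) :
    ∀ x ∈ E,
      Tendsto (fun n : ℕ =>
          (m : ℝ)⁻¹ • f ((1 + m * n - n) • x)
            + (((m : ℝ) - 1) / m) • f ((1 - (n : ℤ)) • x)
            - ((m : ℝ) - 1) • f (n • x)) atTop (𝓝 (f x)) := by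
  classical
  obtain ⟨x₀, hx₀⟩ := hEne
  have h0E : (0:X) ∈ E := by simpa using hEsub x₀ hx₀ x₀ hx₀
  have hnE : ∀ n : ℕ, ∀ x ∈ E, n • x ∈ E := by
    intro n
    induction n with
    | zero => intro x hx; simpa using h0E
    | succ k ih => intro x hx; rw [succ_nsmul]; exact hEadd _ (ih x hx) x hx
  have i0 : Fin m := ⟨0, by omega⟩
  -- φ at zero
  have hφ0 : φ (fun _ => 0) = 0 := by
    have h := hφ1 0 h0E
    have heq : (fun n : ℕ => φ (fun i => if i = (⟨0, by omega⟩ : Fin m) then (0:X) else n • (0:X)))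
        = fun _ : ℕ => φ (fun _ => 0) := by
      funext n; congr 1; funext i; simp
    rw [heq] at h
    exact (tendsto_nhds_unique h tendsto_const_nhds).symm
  -- cardinality of the strict upper triangle
  set S : Finset (Fin m × Fin m) := Finset.univ.filter (fun q : Fin m × Fin m => q.1 < q.2) with hSdef
  have hScard : 2 * S.card = m * m - m := by
    set T : Finset (Fin m × Fin m) := Finset.univ.filter (fun q : Fin m × Fin m => q.2 < q.1)
      with hTdef
    have hswap : S.card = T.card := by
      apply Finset.card_nbij' (i := Prod.swap) (j := Prod.swap)
      · intro q hq; simp only [Finset.mem_coe, hSdef, hTdef, Finset.mem_filter, Finset.mem_univ, true_and,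
          Prod.fst_swap, Prod.snd_swap] at hq ⊢; exact hq
      · intro q hq; simp only [Finset.mem_coe, hSdef, hTdef, Finset.mem_filter, Finset.mem_univ, true_and,
          Prod.fst_swap, Prod.snd_swap] at hq ⊢; exact hq
      · intro q _; exact Prod.swap_swap q
      · intro q _; exact Prod.swap_swap q
    have hdisj : Disjoint S T := by
      rw [Finset.disjoint_left]
      intro q hqS hqT
      simp only [hSdef, Finset.mem_filter, Finset.mem_univ, true_and] at hqS
      simp only [hTdef, Finset.mem_filter, Finset.mem_univ, true_and] at hqT
      exact absurd hqS (lt_asymm hqT)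
    have hunion : S ∪ T = (Finset.univ : Finset (Fin m)).offDiag := by
      ext q
      simp only [Finset.mem_union, hSdef, hTdef, Finset.mem_filter, Finset.mem_univ, true_and,
        Finset.mem_offDiag]
      constructor
      · rintro (h | h)
        · exact ne_of_lt h
        · exact (ne_of_lt h).symm
      · exact fun h => lt_or_gt_of_ne h
    have hcu := Finset.card_union_of_disjoint hdisj
    rw [hunion, Finset.offDiag_card, Finset.card_univ, Fintype.card_fin] at hcu
    omega
  have hcoef : 1 + S.card ≠ m * m := by
    have hm2 : m ≤ m * m := Nat.le_mul_of_pos_left m (by omega)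
    intro h
    generalize hM : m * m = M at hScard hm2 h
    omega
  -- f 0 = 0
  have hf0 : f 0 = 0 := by
    have h := hf (fun _ => 0) (fun _ => h0E)
    simp only [Finset.sum_const_zero, sub_zero, Finset.sum_const, Finset.card_univ,
      Fintype.card_fin, hφ0, ← hSdef] at h
    have h2 : f 0 + S.card • f 0 - m • m • f 0 = 0 := by
      rwa [norm_le_zero_iff] at h
    have h3 : ((1 + S.card : ℝ) - (m * m : ℕ)) • f 0 = 0 := by
      rw [← h2]
      push_cast
      match_scalars
      push_cast
      ring
    rcases smul_eq_zero.mp h3 with hc | hb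
    · exfalso
      apply hcoef
      have : ((1 + S.card : ℕ) : ℝ) = ((m*m : ℕ) : ℝ) := by push_cast at hc ⊢; linarith
      exact_mod_cast this
    · exact hb
  -- main part
  intro x hx
  have key : ∀ n : ℕ,
      ‖f ((1 + m * n - n) • x) + (m-1) • f (x - n • x)
        - m • (f x + (m-1) • f (n • x))‖
        ≤ φ (fun i => if i = (⟨0, by omega⟩ : Fin m) then x else n • x) := by
    intro n
    have h := hf (fun i => if i = (⟨0, by omega⟩ : Fin m) then x else n • x)
      (fun i => by split; exacts [hx, hnE n x hx])
    have e1 : (∑ i : Fin m, if i = (⟨0, by omega⟩ : Fin m) then x else n • x)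
        = (1 + m * n - n) • x := by
      have step : ∀ i : Fin m, (if i = (⟨0, by omega⟩ : Fin m) then x else n • x)
          = n • x + (if i = (⟨0, by omega⟩ : Fin m) then x - n • x else 0) := by
        intro i; split <;> simp
      rw [Finset.sum_congr rfl (fun i _ => step i), Finset.sum_add_distrib, Finset.sum_const,
        Finset.sum_ite_eq' Finset.univ _ (fun _ => x - n • x)]
      simp only [Finset.card_univ, Fintype.card_fin, Finset.mem_univ, if_true]
      have hn : n ≤ m * n := Nat.le_mul_of_pos_left n (by omega)
      have h1 : (1 + m * n - n) = (m * n - n) + 1 := by omega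
      rw [h1, add_nsmul, one_nsmul, sub_nsmul _ hn, mul_nsmul]
      rw [smul_comm n m x]
      abel
    have e2 : (∑ q ∈ Finset.univ.filter (fun q : Fin m × Fin m => q.1 < q.2),
          f ((if q.1 = (⟨0, by omega⟩ : Fin m) then x else n • x)
            - (if q.2 = (⟨0, by omega⟩ : Fin m) then x else n • x)))
        = (m-1) • f (x - n • x) := by
      have step : ∀ q ∈ Finset.univ.filter (fun q : Fin m × Fin m => q.1 < q.2),
          f ((if q.1 = (⟨0, by omega⟩ : Fin m) then x else n • x)
            - (if q.2 = (⟨0, by omega⟩ : Fin m) then x else n • x))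
          = if q.1 = (⟨0, by omega⟩ : Fin m) then f (x - n • x) else 0 := by
        intro q hq
        simp only [Finset.mem_filter, Finset.mem_univ, true_and] at hq
        have h2 : q.2 ≠ (⟨0, by omega⟩ : Fin m) := by
          intro h
          rw [h] at hq
          exact Nat.not_lt_zero _ hq
        by_cases h1 : q.1 = (⟨0, by omega⟩ : Fin m)
        · simp [h1, h2]
        · simp [h1, h2, hf0]
      rw [Finset.sum_congr rfl step, ← Finset.sum_filter, Finset.filter_filter,
        Finset.sum_const]
      congr 1
      have himg : Finset.univ.filter
            (fun q : Fin m × Fin m => q.1 < q.2 ∧ q.1 = (⟨0, by omega⟩ : Fin m))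
          = (Finset.univ.filter (fun j : Fin m => j ≠ (⟨0, by omega⟩ : Fin m))).image
              (fun j => ((⟨0, by omega⟩ : Fin m), j)) := by
        ext q
        simp only [Finset.mem_filter, Finset.mem_univ, true_and, Finset.mem_image]
        constructor
        · rintro ⟨hlt, h1⟩
          refine ⟨q.2, ?_, ?_⟩
          · intro h
            rw [h1, h] at hlt
            exact lt_irrefl _ hlt
          · exact Prod.ext h1.symm rfl
        · rintro ⟨j, hj, rfl⟩
          refine ⟨?_, rfl⟩
          have hjv : j.val ≠ 0 := by
            intro h; exact hj (Fin.ext h)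
          exact Nat.pos_of_ne_zero hjv
      rw [himg, Finset.card_image_of_injective _ (by
        intro a b h
        simpa [Prod.ext_iff] using h)]
      rw [Finset.filter_ne', Finset.card_erase_of_mem (Finset.mem_univ _), Finset.card_univ,
        Fintype.card_fin]
    have e3 : (∑ i : Fin m, f (if i = (⟨0, by omega⟩ : Fin m) then x else n • x))
        = f x + (m-1) • f (n • x) := by
      have step : ∀ i : Fin m, f (if i = (⟨0, by omega⟩ : Fin m) then x else n • x)
          = f (n • x) + (if i = (⟨0, by omega⟩ : Fin m) then f x - f (n • x) else 0) := by
        intro i; split <;> simp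
      rw [Finset.sum_congr rfl (fun i _ => step i), Finset.sum_add_distrib, Finset.sum_const,
        Finset.sum_ite_eq' Finset.univ _ (fun _ => f x - f (n • x))]
      simp only [Finset.card_univ, Fintype.card_fin, Finset.mem_univ, if_true]
      have hms : m • f (n • x) = (m - 1) • f (n • x) + f (n • x) := by
        rw [← succ_nsmul]
        congr 1
        omega
      rw [hms]
      abel
    rw [e1, e2, e3] at h
    exact h
  rw [tendsto_iff_norm_sub_tendsto_zero]
  have htend : Tendsto (fun n : ℕ =>
      (m : ℝ)⁻¹ * φ (fun i => if i = (⟨0, by omega⟩ : Fin m) then x else n • x))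
      atTop (𝓝 0) := by
    have := (hφ1 x hx).const_mul ((m:ℝ)⁻¹)
    simpa using this
  apply squeeze_zero (fun n => norm_nonneg _) _ htend
  intro n
  have hb : ((1 : ℤ) - (n:ℤ)) • x = x - n • x := by
    rw [sub_zsmul, one_zsmul, natCast_zsmul]; abel
  have hvec : ((m : ℝ)⁻¹ • f ((1 + m * n - n) • x)
        + (((m : ℝ) - 1) / m) • f ((1 - (n : ℤ)) • x)
        - ((m : ℝ) - 1) • f (n • x)) - f x
      = (m : ℝ)⁻¹ • (f ((1 + m * n - n) • x) + (m-1) • f (x - n • x)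
        - m • (f x + (m-1) • f (n • x))) := by
    rw [hb]
    have hmne : (m:ℝ) ≠ 0 := Nat.cast_ne_zero.mpr (by omega)
    match_scalars
    · field_simp
    · push_cast [Nat.cast_sub (by omega : 1 ≤ m)]
      field_simp
    · push_cast [Nat.cast_sub (by omega : 1 ≤ m)]
      field_simp
    · field_simp
  rw [hvec, norm_smul]
  have : ‖(m:ℝ)⁻¹‖ = (m:ℝ)⁻¹ := by
    rw [Real.norm_eq_abs, abs_of_nonneg]; positivity
  rw [this]
  exact mul_le_mul_of_nonneg_left (key n) (by positivity)
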